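/- The Izergin function satisfies the Korepin recursion: specializing v_N = w_N - γ gives Z̆_N = [γ] · ∏_{i=1}^{N-1} [v_i-w_N][w_N-w_i-γ] · Z̆_{N-1}, where Z̆_{N-1} is the same function in the variables v_1,…,v_{N-1}, w_1,…,w_{N-1}. -/

import Mathlib

open Finset

/-- The Izergin function, in the determinant form
`det([γ]∏_{k≠i}[v_k-w_j+γ][v_k-w_j]) / ∏_{i<j}[v_i-v_j][w_j-w_i]`. -/
noncomputable def izerginDet (γ : ℂ) {N : ℕ} (v w : Fin N → ℂ) : ℂ :=
  Matrix.det (Matrix.of fun i j : Fin N =>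
      Complex.sinh γ *
        ∏ k ∈ Finset.univ.erase i, (Complex.sinh (v k - w j + γ) * Complex.sinh (v k - w j))) /
  ((∏ i, ∏ j ∈ Ioi i, Complex.sinh (v i - v j)) *
   (∏ i, ∏ j ∈ Ioi i, Complex.sinh (w j - w i)))

private lemma erase_castSucc' {N : ℕ} (i : Fin N) :
    (Finset.univ.erase (Fin.castSucc i) : Finset (Fin (N+1))) =
      insert (Fin.last N) ((Finset.univ.erase i).image Fin.castSucc) := by
  ext k
  induction k using Fin.lastCases with
  | last => simp [(Fin.castSucc_lt_last i).ne', fun x : Fin N => (Fin.castSucc_lt_last x).ne']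
  | cast j => simp [Fin.castSucc_inj, (Fin.castSucc_lt_last j).ne]

private lemma Ioi_castSucc' {N : ℕ} (i : Fin N) :
    (Finset.Ioi (Fin.castSucc i) : Finset (Fin (N+1))) =
      insert (Fin.last N) ((Finset.Ioi i).image Fin.castSucc) := by
  ext k
  induction k using Fin.lastCases with
  | last => simp [Fin.castSucc_lt_last]
  | cast j => simp [Fin.castSucc_lt_castSucc_iff, (Fin.castSucc_lt_last j).ne, Fin.le_last]

private lemma erase_last' {N : ℕ} :
    (Finset.univ.erase (Fin.last N) : Finset (Fin (N+1))) =
      Finset.univ.image Fin.castSucc := by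
  ext k
  induction k using Fin.lastCases with
  | last => simp [fun x : Fin N => (Fin.castSucc_lt_last x).ne']
  | cast j => simp [(Fin.castSucc_lt_last j).ne]

private lemma last_not_mem_image {N : ℕ} (s : Finset (Fin N)) :
    Fin.last N ∉ s.image Fin.castSucc := by
  simp only [Finset.mem_image, not_exists, not_and]
  exact fun x _ => (Fin.castSucc_lt_last x).ne

private lemma prod_Ioi_split {N : ℕ} (f : Fin (N+1) → Fin (N+1) → ℂ) :
    (∏ i, ∏ j ∈ Ioi i, f i j) =
      (∏ i : Fin N, f i.castSucc (Fin.last N)) *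
        ∏ i : Fin N, ∏ j ∈ Ioi i, f i.castSucc j.castSucc := by
  rw [Fin.prod_univ_castSucc]
  have hlast : (Ioi (Fin.last N) : Finset (Fin (N+1))) = ∅ := by
    ext k; simp [not_lt.2 (Fin.le_last k)]
  rw [hlast]
  simp only [Finset.prod_empty, mul_one]
  rw [← Finset.prod_mul_distrib]
  refine Finset.prod_congr rfl fun i _ => ?_
  rw [Ioi_castSucc', Finset.prod_insert (last_not_mem_image _),
    Finset.prod_image (fun a _ b _ h => Fin.castSucc_injective _ h)]

/-- The Korepin recursion for the Izergin function: specializing `v_N = w_N - γ`. -/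
theorem izergin_korepin_recursion (γ : ℂ) {N : ℕ} (hN : 1 ≤ N) (v w : Fin (N + 1) → ℂ)
    (hv : v (Fin.last N) = w (Fin.last N) - γ)
    (hvv : ∀ i j, i ≠ j → Complex.sinh (v i - v j) ≠ 0)
    (hww : ∀ i j, i ≠ j → Complex.sinh (w i - w j) ≠ 0) :
    izerginDet γ v w =
      Complex.sinh γ *
        (∏ i : Fin N, Complex.sinh (v i.castSucc - w (Fin.last N)) *
          Complex.sinh (w (Fin.last N) - w i.castSucc - γ)) *
        izerginDet γ (v ∘ Fin.castSucc) (w ∘ Fin.castSucc) := by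
  classical
  set L : Fin (N+1) := Fin.last N with hL
  set A : Matrix (Fin (N+1)) (Fin (N+1)) ℂ :=
    Matrix.of (fun i j => Complex.sinh γ *
      ∏ k ∈ Finset.univ.erase i,
        (Complex.sinh (v k - w j + γ) * Complex.sinh (v k - w j))) with hA
  set B : Matrix (Fin N) (Fin N) ℂ :=
    Matrix.of (fun i j : Fin N => Complex.sinh γ *
      ∏ k ∈ Finset.univ.erase i,
        (Complex.sinh ((v ∘ Fin.castSucc) k - (w ∘ Fin.castSucc) j + γ) *
         Complex.sinh ((v ∘ Fin.castSucc) k - (w ∘ Fin.castSucc) j))) with hB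
  -- off-diagonal entries of the last column vanish
  have hzero : ∀ i : Fin (N+1), i ≠ L → A i L = 0 := by
    intro i hi
    have hmem : L ∈ Finset.univ.erase i := Finset.mem_erase.2 ⟨Ne.symm hi, Finset.mem_univ _⟩
    have hv0 : v L - w L + γ = 0 := by rw [hv]; ring
    have h0 : Complex.sinh (v L - w L + γ) * Complex.sinh (v L - w L) = 0 := by
      rw [hv0, Complex.sinh_zero, zero_mul]
    show Complex.sinh γ * _ = 0
    rw [Finset.prod_eq_zero hmem h0, mul_zero]
  -- Laplace expansion along the last column
  have hdet : A.det = A L L * (A.submatrix Fin.castSucc Fin.castSucc).det := by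
    rw [Matrix.det_succ_column A L]
    rw [Finset.sum_eq_single L]
    · rw [hL, Fin.succAbove_last]
      have : ((Fin.last N : Fin (N+1)) : ℕ) + ((Fin.last N : Fin (N+1)) : ℕ) = 2 * N := by
        simp [Fin.val_last]; ring
      rw [this, pow_mul]
      norm_num
    · intro i _ hi
      rw [hzero i hi]; ring
    · simp
  -- the corner entry
  have hALL : A L L = Complex.sinh γ *
      ∏ k : Fin N, (Complex.sinh (v k.castSucc - v L) * Complex.sinh (v k.castSucc - w L)) := by
    have : ∀ k : Fin N, v k.castSucc - w L + γ = v k.castSucc - v L := by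
      intro k; rw [hv]; ring
    simp only [hA, Matrix.of_apply, hL]
    rw [← hL, erase_last', Finset.prod_image (fun a _ b _ h => Fin.castSucc_injective _ h)]
    congr 1
    exact Finset.prod_congr rfl fun k _ => by rw [this k]
  -- the minor
  have hsub : (A.submatrix Fin.castSucc Fin.castSucc).det =
      (∏ j : Fin N, Complex.sinh (w L - w j.castSucc) * Complex.sinh (w L - w j.castSucc - γ)) *
        B.det := by
    rw [← Matrix.det_mul_row]
    congr 1
    ext i j
    have e1 : v L - w j.castSucc + γ = w L - w j.castSucc := by rw [hv]; ring
    have e2 : v L - w j.castSucc = w L - w j.castSucc - γ := by rw [hv]; ring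
    simp only [Matrix.submatrix_apply, hA, hB, Matrix.of_apply, Function.comp]
    rw [erase_castSucc',
      Finset.prod_insert (last_not_mem_image _),
      Finset.prod_image (fun a _ b _ h => Fin.castSucc_injective _ h), ← hL, e1, e2]
    ring
  -- nonvanishing facts
  have hPv : (∏ i : Fin N, Complex.sinh (v i.castSucc - v L)) ≠ 0 :=
    Finset.prod_ne_zero_iff.2 fun i _ => hvv _ _ (Fin.castSucc_lt_last i).ne
  have hPw : (∏ i : Fin N, Complex.sinh (w L - w i.castSucc)) ≠ 0 :=
    Finset.prod_ne_zero_iff.2 fun i _ => hww _ _ (Fin.castSucc_lt_last i).ne'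
  have hDv : (∏ i : Fin N, ∏ j ∈ Ioi i, Complex.sinh (v i.castSucc - v j.castSucc)) ≠ 0 :=
    Finset.prod_ne_zero_iff.2 fun i _ => Finset.prod_ne_zero_iff.2 fun j hj =>
      hvv _ _ (by simpa [Fin.castSucc_inj] using (Finset.mem_Ioi.1 hj).ne)
  have hDw : (∏ i : Fin N, ∏ j ∈ Ioi i, Complex.sinh (w j.castSucc - w i.castSucc)) ≠ 0 :=
    Finset.prod_ne_zero_iff.2 fun i _ => Finset.prod_ne_zero_iff.2 fun j hj =>
      hww _ _ (by simpa [Fin.castSucc_inj] using (Finset.mem_Ioi.1 hj).ne')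
  -- assemble
  simp only [izerginDet]
  rw [show (Matrix.of fun i j : Fin (N+1) => Complex.sinh γ *
      ∏ k ∈ Finset.univ.erase i,
        (Complex.sinh (v k - w j + γ) * Complex.sinh (v k - w j))) = A from rfl]
  rw [hdet, hALL, hsub, prod_Ioi_split (fun i j => Complex.sinh (v i - v j)),
    prod_Ioi_split (fun i j => Complex.sinh (w j - w i))]
  rw [show (Matrix.of fun i j : Fin N => Complex.sinh γ *
      ∏ k ∈ Finset.univ.erase i,
        (Complex.sinh ((v ∘ Fin.castSucc) k - (w ∘ Fin.castSucc) j + γ) *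
         Complex.sinh ((v ∘ Fin.castSucc) k - (w ∘ Fin.castSucc) j))) = B from rfl]
  simp only [Finset.prod_mul_distrib]
  simp only [← hL, Function.comp_apply]
  field_simp
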